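/- arXiv:math/0610250 — 2 statements merged into one kernel-verified Lean document; each statement's English description precedes it below -/
import Mathlib

section
/- Let X ∈ sl_n(k) be such that ad X (acting on gl_n(k)) has no nonzero rational (equivalently, no nonzero integer) eigenvalue. Then the stabilizer of the connection X dlog z under the gauge action of SL_n(K) equals the centralizer of X in SL_n(k): every g ∈ SL_n(K) with gXg^{-1} + z∂_z(g)g^{-1} = X lies in SL_n(k) and commutes with X. -/
open HahnSeries Matrix

variable {k : Type*} [Field k]

/-- The derivation `z * d/dz` on formal Laurent series. -/
noncomputable def zD (f : LaurentSeries k) : LaurentSeries k where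
  coeff i := (i : k) * f.coeff i
  isPWO_support' := f.isPWO_support'.mono (by
    intro i hi
    simp only [Function.mem_support, ne_eq] at hi ⊢
    exact fun h => hi (by rw [h, mul_zero]))

/-- `z∂_z` applied entrywise to a matrix of Laurent series. -/
noncomputable def zDM {n : ℕ} (g : Matrix (Fin n) (Fin n) (LaurentSeries k)) :
    Matrix (Fin n) (Fin n) (LaurentSeries k) :=
  Matrix.of fun a b => zD (g a b)

/-- A constant matrix, viewed as a matrix of Laurent series. -/
noncomputable def constM {n : ℕ} (X : Matrix (Fin n) (Fin n) k) :
    Matrix (Fin n) (Fin n) (LaurentSeries k) :=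
  X.map (HahnSeries.C : k →+* LaurentSeries k)

/-- The `i`-th coefficient matrix of a matrix of Laurent series. -/
def coeffM {n : ℕ} (g : Matrix (Fin n) (Fin n) (LaurentSeries k)) (i : ℤ) :
    Matrix (Fin n) (Fin n) k :=
  Matrix.of fun a b => (g a b).coeff i

/-- Stabilizer of `X dlog z` under the gauge action of `SL_n(K)`:
if `X ∈ sl_n(k)` has no nonzero rational eigenvalue of `ad X`, then every
`g ∈ SL_n(K)` fixing the connection `X dlog z` (i.e. `gXg⁻¹ + z∂_z(g)g⁻¹ = X`,
written multiplicatively as `gX + z∂_z(g) = Xg`) is a constant matrix in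
`SL_n(k)` commuting with `X`. -/
theorem stmt3 {n : ℕ} (X : Matrix (Fin n) (Fin n) k) (hX : Matrix.trace X = 0)
    (hrat : ∀ (q : ℚ) (B : Matrix (Fin n) (Fin n) k),
      B ≠ 0 → X * B - B * X = (q : k) • B → q = 0)
    (g : Matrix (Fin n) (Fin n) (LaurentSeries k)) (hg : g.det = 1)
    (hfix : g * constM X + zDM g = constM X * g) :
    ∃ g₀ : Matrix (Fin n) (Fin n) k,
      g = constM g₀ ∧ g₀.det = 1 ∧ g₀ * X = X * g₀ := by
  have key : ∀ i : ℤ,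
      X * coeffM g i - coeffM g i * X = (i : k) • coeffM g i := by
    intro i
    ext a b
    have h := congrArg (fun M => ((M a b : LaurentSeries k)).coeff i) hfix
    simp only [Matrix.add_apply, Matrix.mul_apply, zDM, constM, Matrix.map_apply,
      Matrix.of_apply, HahnSeries.coeff_add, zD] at h
    have hsum1 : (∑ c, g a c * HahnSeries.C (X c b)).coeff i
        = ∑ c, (g a c).coeff i * X c b := by
      refine (map_sum (HahnSeries.coeff.addMonoidHom i) _ Finset.univ).trans
        (Finset.sum_congr rfl fun c _ => ?_)
      show (g a c * HahnSeries.C (X c b)).coeff i = _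
      rw [HahnSeries.C_apply, HahnSeries.coeff_mul_single_zero]
    have hsum2 : (∑ c, HahnSeries.C (X a c) * g c b).coeff i
        = ∑ c, X a c * (g c b).coeff i := by
      refine (map_sum (HahnSeries.coeff.addMonoidHom i) _ Finset.univ).trans
        (Finset.sum_congr rfl fun c _ => ?_)
      show (HahnSeries.C (X a c) * g c b).coeff i = _
      rw [HahnSeries.C_apply, HahnSeries.coeff_single_zero_mul]
    rw [hsum1, hsum2] at h
    simp only [Matrix.sub_apply, Matrix.mul_apply, Matrix.smul_apply, coeffM,
      Matrix.of_apply, smul_eq_mul]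
    linear_combination -h
  have hzero : ∀ i : ℤ, i ≠ 0 → coeffM g i = 0 := by
    intro i hi
    by_contra hB
    have := hrat (i : ℚ) (coeffM g i) hB (by
      rw [key i]; congr 1; push_cast; ring)
    exact hi (by exact_mod_cast this)
  have hconst : g = constM (coeffM g 0) := by
    ext a b j
    show (g a b).coeff j = (HahnSeries.C ((g a b).coeff 0)).coeff j
    rw [HahnSeries.C_apply]
    rcases eq_or_ne j 0 with rfl | hj
    · rw [HahnSeries.coeff_single_same]
    · rw [HahnSeries.coeff_single_of_ne hj]
      have h2 := congrFun (congrFun (hzero j hj) a) b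
      simpa [coeffM] using h2
  refine ⟨coeffM g 0, hconst, ?_, ?_⟩
  · have hdet : (constM (coeffM g 0)).det = 1 := hconst ▸ hg
    rw [constM, ← RingHom.mapMatrix_apply, ← RingHom.map_det] at hdet
    have h1 : (HahnSeries.C : k →+* LaurentSeries k) ((coeffM g 0).det)
        = (HahnSeries.C : k →+* LaurentSeries k) (1 : k) := by
      rwa [_root_.map_one]
    exact HahnSeries.C_injective h1
  · have h0 := key 0
    simp only [Int.cast_zero, zero_smul, sub_eq_zero] at h0
    exact h0.symm
end

section
/- If A is an SL_n-connection such that the associated GL_n-connection is gauge equivalent (by some g ∈ GL_n(K)) to a first-kind connection X(z) dlog z with X(z) ∈ gl_n(k[[z]]), then after pulling back along z ↦ z^n, A becomes SL_n(K)-gauge equivalent to a first-kind connection: explicitly, with f an n-th root of det(g^{-1})(z^n) in k((z)), h = f·i_n(g) lies in SL_n(K) and h[i_n(A)] = (nX(z^n) + z∂_z(f)f^{-1}·1) dlog z, where z∂_z(f)f^{-1} ∈ k[[z]]. -/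
open HahnSeries Matrix
set_option maxHeartbeats 1000000
set_option synthInstance.maxHeartbeats 400000

variable {k : Type*} [Field k]

/-- Substitution `z ↦ z^m` on Laurent series, as a ring homomorphism. -/
noncomputable def substL (m : ℕ+) : LaurentSeries k →+* LaurentSeries k :=
  embDomainRingHom
    { toFun := fun i => (m : ℤ) * i
      map_zero' := by simp
      map_add' := by intro a b; ring }
    (fun a b h => by
      have : (m : ℤ) ≠ 0 := by positivity
      exact mul_left_cancel₀ this h)
    (fun a b => by
      constructor
      · intro h
        exact le_of_mul_le_mul_left h (by positivity)
      · intro h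
        exact mul_le_mul_of_nonneg_left h (by positivity))

/-- Pull-back of the connection `A dlog z` along `z ↦ z^m`: `m · A(z^m) dlog z`. -/
noncomputable def pullbackConn {n : ℕ} (m : ℕ+) (A : Matrix (Fin n) (Fin n) (LaurentSeries k)) :
    Matrix (Fin n) (Fin n) (LaurentSeries k) :=
  ((m : ℕ) : k) • A.map (substL m)

/-- `B` is of the first kind: no negative powers of `z`. -/
def FirstKind {n : ℕ} (B : Matrix (Fin n) (Fin n) (LaurentSeries k)) : Prop :=
  ∀ a b, ∀ l : ℤ, l < 0 → (B a b).coeff l = 0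



section Aux
variable {k : Type*} [Field k]

lemma zD_coeff (f : LaurentSeries k) (i : ℤ) : (zD f).coeff i = (i : k) * f.coeff i := rfl

lemma zD_support (f : LaurentSeries k) : (zD f).support ⊆ f.support := by
  intro i hi
  simp only [HahnSeries.mem_support, ne_eq] at hi ⊢
  rw [zD_coeff] at hi
  exact fun h => hi (by rw [h, mul_zero])

lemma zD_add (a b : LaurentSeries k) : zD (a + b) = zD a + zD b := by
  ext i
  simp [zD_coeff, mul_add]

lemma zD_mul (a b : LaurentSeries k) : zD (a * b) = zD a * b + a * zD b := by
  ext i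
  rw [HahnSeries.coeff_add, zD_coeff, HahnSeries.coeff_mul,
    HahnSeries.coeff_mul_left' a.isPWO_support (zD_support a),
    HahnSeries.coeff_mul_right' b.isPWO_support (zD_support b),
    ← Finset.sum_add_distrib, Finset.mul_sum]
  apply Finset.sum_congr rfl
  rintro ⟨p, q⟩ hpq
  have h : p + q = i := (Finset.mem_addAntidiagonal.mp hpq).2.2
  simp only [zD_coeff]
  rw [← h]
  push_cast
  ring

/-- `zD` as an additive monoid hom. -/
noncomputable def zDhom : LaurentSeries k →+ LaurentSeries k where
  toFun := zD
  map_zero' := by ext i; simp [zD_coeff]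
  map_add' := zD_add

lemma substL_coeff_mul (m : ℕ+) (x : LaurentSeries k) (i : ℤ) :
    (substL m x).coeff ((m : ℤ) * i) = x.coeff i :=
  HahnSeries.embDomain_coeff

lemma substL_coeff_of_not_dvd (m : ℕ+) (x : LaurentSeries k) (j : ℤ)
    (h : ¬ ((m : ℤ) ∣ j)) : (substL m x).coeff j = 0 := by
  apply HahnSeries.embDomain_notin_image_support
  rintro ⟨i, -, hi⟩
  exact h ⟨i, hi.symm⟩

lemma zD_substL (m : ℕ+) (x : LaurentSeries k) :
    zD (substL m x) = ((m : ℕ) : k) • substL m (zD x) := by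
  ext j
  rw [zD_coeff, HahnSeries.coeff_smul, smul_eq_mul]
  by_cases h : (m : ℤ) ∣ j
  · obtain ⟨i, rfl⟩ := h
    rw [substL_coeff_mul, substL_coeff_mul, zD_coeff]
    push_cast
    ring
  · rw [substL_coeff_of_not_dvd _ _ _ h, substL_coeff_of_not_dvd _ _ _ h, mul_zero, mul_zero]

lemma zDM_mul {n : ℕ} (P Q : Matrix (Fin n) (Fin n) (LaurentSeries k)) :
    zDM (P * Q) = zDM P * Q + P * zDM Q := by
  refine Matrix.ext fun a b => ?_
  show zD ((P * Q) a b) = _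
  simp only [Matrix.add_apply, Matrix.mul_apply]
  have : zD (∑ c, P a c * Q c b) = ∑ c, zD (P a c * Q c b) := map_sum zDhom _ _
  rw [this, ← Finset.sum_add_distrib]
  apply Finset.sum_congr rfl
  intro c _
  exact zD_mul _ _

lemma zDM_smul {n : ℕ} (f : LaurentSeries k) (G : Matrix (Fin n) (Fin n) (LaurentSeries k)) :
    zDM (f • G) = zD f • G + f • zDM G := by
  refine Matrix.ext fun a b => ?_
  show zD (f • G a b) = _
  simp only [Matrix.add_apply, Matrix.smul_apply, smul_eq_mul]
  exact zD_mul _ _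

lemma zDM_map_substL {n : ℕ} (m : ℕ+) (g : Matrix (Fin n) (Fin n) (LaurentSeries k)) :
    zDM (g.map (substL m)) = ((m : ℕ) : k) • (zDM g).map (substL m) := by
  refine Matrix.ext fun a b => ?_
  show zD (substL m (g a b)) = _
  simp only [Matrix.smul_apply, Matrix.map_apply]
  exact zD_substL m (g a b)

end Aux


lemma zD_mul_inv_coeff (f : LaurentSeries k) (hf : f ≠ 0) (l : ℤ) (hl : l < 0) :
    (zD f * f⁻¹).coeff l = 0 := by
  set m : ℤ := f.order with hm
  have hfinv : f⁻¹ ≠ 0 := inv_ne_zero hf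
  have hordinv : f⁻¹.order = -m := by
    have h1 : (f * f⁻¹).order = 0 := by rw [mul_inv_cancel₀ hf, HahnSeries.order_one]
    have h2 := HahnSeries.order_mul hf hfinv
    rw [h1] at h2
    linarith
  set r : LaurentSeries k := zD f - (m : k) • f with hr
  have hsplit : zD f = (m : k) • f + r := by rw [hr]; abel
  have hrcoeff : ∀ j : ℤ, j ≤ m → r.coeff j = 0 := by
    intro j hj
    rw [hr, HahnSeries.coeff_sub, HahnSeries.coeff_smul, zD_coeff, smul_eq_mul]
    rcases lt_or_eq_of_le hj with hlt | heq
    · rw [HahnSeries.coeff_eq_zero_of_lt_order hlt, mul_zero, mul_zero, sub_zero]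
    · rw [heq]; ring
  have key : (r * f⁻¹).coeff l = 0 := by
    by_cases hr0 : r = 0
    · simp [hr0]
    · apply HahnSeries.coeff_eq_zero_of_lt_order
      rw [HahnSeries.order_mul hr0 hfinv, hordinv]
      have hle : m + 1 ≤ r.order := by
        by_contra hcon
        push_neg at hcon
        exact (HahnSeries.coeff_order_eq_zero.not.mpr hr0) (hrcoeff _ (by linarith))
      linarith
  have hexp : zD f * f⁻¹ = (m : k) • (f * f⁻¹) + r * f⁻¹ := by
    rw [hsplit, ← HahnSeries.C_mul_eq_smul, ← HahnSeries.C_mul_eq_smul]; ring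
  rw [hexp, mul_inv_cancel₀ hf, HahnSeries.coeff_add, key, add_zero,
    HahnSeries.coeff_smul, HahnSeries.coeff_one, if_neg (by omega : ¬ l = 0), smul_zero]

/-- If the `GL_n`-connection associated to a traceless `A` is gauge equivalent via
`g ∈ GL_n(K)` to a first-kind connection `X dlog z`, then with `f` an `n`-th root
of `det(g⁻¹)(z^n)`, the matrix `h = f · i_n(g)` lies in `SL_n(K)` and
`h[i_n(A)] = (n X(z^n) + z∂_z(f) f⁻¹ · 1) dlog z`, where `z∂_z(f) f⁻¹` is a
formal power series; so `i_n(A)` is `SL_n(K)`-gauge equivalent to a first-kind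
connection. -/
theorem stmt17 {n : ℕ} (hn : 0 < n)
    (A g X : Matrix (Fin n) (Fin n) (LaurentSeries k))
    (htrA : Matrix.trace A = 0)
    (hgu : IsUnit g.det) (hXfk : FirstKind X)
    (hgauge : g * A + zDM g = X * g)
    (f : LaurentSeries k)
    (hf : f ^ n = substL ⟨n, hn⟩ (g.det)⁻¹) :
    letI h : Matrix (Fin n) (Fin n) (LaurentSeries k) := f • g.map (substL ⟨n, hn⟩)
    Matrix.det h = 1 ∧
    h * pullbackConn ⟨n, hn⟩ A + zDM h
      = (pullbackConn ⟨n, hn⟩ X + (zD f * f⁻¹) • (1 : Matrix (Fin n) (Fin n) (LaurentSeries k))) * h ∧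
    (∀ l : ℤ, l < 0 → (zD f * f⁻¹).coeff l = 0) := by
  have hdet0 : g.det ≠ 0 := hgu.ne_zero
  set mp : ℕ+ := ⟨n, hn⟩ with hmp
  set σ : LaurentSeries k →+* LaurentSeries k := substL (k := k) mp with hσ
  set G : Matrix (Fin n) (Fin n) (LaurentSeries k) := g.map σ with hGdef
  have hfne : f ≠ 0 := by
    intro h0
    have h1 : σ (g.det)⁻¹ = 0 := by rw [← hf, h0, zero_pow hn.ne']
    have h2 : ((g.det)⁻¹ : LaurentSeries k) = 0 :=
      (RingHom.injective σ) (by rw [h1, map_zero])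
    exact inv_ne_zero hdet0 h2
  have hdet1 : (f • G).det = 1 := by
    have hmd : (g.map ⇑σ).det = σ g.det := (RingHom.map_det σ g).symm
    rw [Matrix.det_smul, Fintype.card_fin, hf, hGdef, hmd,
      ← _root_.map_mul, inv_mul_cancel₀ hdet0, _root_.map_one]
  have hmain : (f • G) * pullbackConn mp A + zDM (f • G)
      = (pullbackConn mp X + (zD f * f⁻¹) • (1 : Matrix (Fin n) (Fin n) (LaurentSeries k)))
        * (f • G) := by
    have hPA : pullbackConn mp A = (((mp : ℕ)) : k) • A.map σ := rfl
    have hPX : pullbackConn mp X = (((mp : ℕ)) : k) • X.map σ := rfl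
    have hGA : G * A.map σ = (g * A).map σ := Matrix.map_mul.symm
    have hXg : X.map σ * G = (X * g).map σ := Matrix.map_mul.symm
    have hXgmap : (X * g).map σ = (g * A).map σ + (zDM g).map σ := by
      rw [← Matrix.map_add σ (fun a b => map_add σ a b), hgauge]
    have hq : (zD f * f⁻¹) * f = zD f := by
      rw [mul_assoc, inv_mul_cancel₀ hfne, mul_one]
    have hsm : ∀ (M : Matrix (Fin n) (Fin n) (LaurentSeries k)),
        ((mp : ℕ) : k) • M = ((HahnSeries.C (((mp : ℕ)) : k)) : LaurentSeries k) • M := by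
      intro M
      refine Matrix.ext fun a b => ?_
      simp only [Matrix.smul_apply]
      rw [smul_eq_mul, HahnSeries.C_mul_eq_smul]
    rw [hPA, hPX, zDM_smul, hGdef, zDM_map_substL, ← hGdef, hsm, hsm, hsm,
      Matrix.add_mul, Matrix.smul_mul (zD f * f⁻¹) 1, Matrix.one_mul,
      smul_smul (zD f * f⁻¹) f, hq,
      Matrix.smul_mul ((HahnSeries.C (((mp : ℕ)) : k)) : LaurentSeries k) (X.map ⇑σ),
      Matrix.mul_smul (X.map ⇑σ) f G, hXg, hXgmap,
      Matrix.mul_smul (f • G) ((HahnSeries.C (((mp : ℕ)) : k)) : LaurentSeries k) (A.map ⇑σ),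
      Matrix.smul_mul f G, hGA,
      smul_add, smul_add, smul_comm f ((HahnSeries.C (((mp : ℕ)) : k)) : LaurentSeries k)]
    abel
  refine ⟨hdet1, ?_, fun l hl => zD_mul_inv_coeff f hfne l hl⟩
  exact hmain
end
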